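/- With A and S_k as defined, define |S_k(j)| = Σ_{ℓ=1}^{j} (k − S_k(j,ℓ)) and δ_j = |S_k(j)| − |S_k(j+1)| + k for j ∈ [1, n−1]. Then 0 ≤ δ_j ≤ k + (number of active indices in S_k(j)), and moreover δ_j equals the number of active indices ℓ ≤ j in S_k(j) with A[ℓ] < A[j+1]. -/

import Mathlib

open Finset

/-- `Sk k A j ℓ` is the number of indices `ℓ'` with `ℓ < ℓ' ≤ j` and `A ℓ' > A ℓ`,
capped at `k`. -/
def Sk {n : ℕ} (k : ℕ) (A : Fin n → ℤ) (j ℓ : Fin n) : ℕ :=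
  min k (Finset.univ.filter (fun ℓ' : Fin n => ℓ < ℓ' ∧ ℓ' ≤ j ∧ A ℓ < A ℓ')).card

/-- With `|S_k(j)| = Σ_{ℓ ≤ j} (k − S_k(j,ℓ))` and `δ_j = |S_k(j)| − |S_k(j+1)| + k`,
we have `0 ≤ δ_j ≤ k + #active(j)`, and `δ_j` equals the number of active indices
`ℓ ≤ j` with `A ℓ < A (j+1)`. -/
theorem delta_eq_incremented_count {n k : ℕ} (A : Fin n → ℤ) (hA : Function.Injective A)
    (j j' : Fin n) (hj' : (j' : ℕ) = (j : ℕ) + 1) :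
    0 ≤ (∑ ℓ ∈ Finset.univ.filter (fun ℓ : Fin n => ℓ ≤ j), ((k : ℤ) - Sk k A j ℓ)) -
        (∑ ℓ ∈ Finset.univ.filter (fun ℓ : Fin n => ℓ ≤ j'), ((k : ℤ) - Sk k A j' ℓ)) + k ∧
    (∑ ℓ ∈ Finset.univ.filter (fun ℓ : Fin n => ℓ ≤ j), ((k : ℤ) - Sk k A j ℓ)) -
        (∑ ℓ ∈ Finset.univ.filter (fun ℓ : Fin n => ℓ ≤ j'), ((k : ℤ) - Sk k A j' ℓ)) + k ≤
      (k : ℤ) + (Finset.univ.filter (fun ℓ : Fin n => ℓ ≤ j ∧ Sk k A j ℓ < k)).card ∧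
    (∑ ℓ ∈ Finset.univ.filter (fun ℓ : Fin n => ℓ ≤ j), ((k : ℤ) - Sk k A j ℓ)) -
        (∑ ℓ ∈ Finset.univ.filter (fun ℓ : Fin n => ℓ ≤ j'), ((k : ℤ) - Sk k A j' ℓ)) + k =
      ((Finset.univ.filter (fun ℓ : Fin n =>
        ℓ ≤ j ∧ Sk k A j ℓ < k ∧ A ℓ < A j')).card : ℤ) := by
  have hjj' : j < j' := by rw [Fin.lt_def]; omega
  -- card relation
  have hcard : ∀ ℓ : Fin n, ℓ ≤ j →
      (Finset.univ.filter (fun ℓ' : Fin n => ℓ < ℓ' ∧ ℓ' ≤ j' ∧ A ℓ < A ℓ')).card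
      = (Finset.univ.filter (fun ℓ' : Fin n => ℓ < ℓ' ∧ ℓ' ≤ j ∧ A ℓ < A ℓ')).card
        + (if A ℓ < A j' then 1 else 0) := by
    intro ℓ hℓ
    by_cases h : A ℓ < A j'
    · rw [if_pos h]
      have hset : (Finset.univ.filter (fun ℓ' : Fin n => ℓ < ℓ' ∧ ℓ' ≤ j' ∧ A ℓ < A ℓ'))
          = insert j' (Finset.univ.filter (fun ℓ' : Fin n => ℓ < ℓ' ∧ ℓ' ≤ j ∧ A ℓ < A ℓ')) := by
        ext x
        simp only [mem_insert, mem_filter, mem_univ, true_and]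
        constructor
        · rintro ⟨h1, h2, h3⟩
          by_cases hx : x = j'
          · left; exact hx
          · right
            refine ⟨h1, ?_, h3⟩
            have hne : (x : ℕ) ≠ (j' : ℕ) := fun hc => hx (Fin.ext hc)
            rw [Fin.le_def] at h2 ⊢; omega
        · rintro (rfl | ⟨h1, h2, h3⟩)
          · exact ⟨lt_of_le_of_lt hℓ hjj', le_refl _, h⟩
          · exact ⟨h1, le_trans h2 (le_of_lt hjj'), h3⟩
      rw [hset, Finset.card_insert_of_notMem]
      intro hmem
      simp only [mem_filter, mem_univ, true_and] at hmem
      exact absurd (lt_of_le_of_lt hmem.2.1 hjj') (lt_irrefl _)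
    · rw [if_neg h, add_zero]
      congr 1
      ext x
      simp only [mem_filter, mem_univ, true_and]
      constructor
      · rintro ⟨h1, h2, h3⟩
        refine ⟨h1, ?_, h3⟩
        have hx : x ≠ j' := fun hc => h (hc ▸ h3)
        have hne : (x : ℕ) ≠ (j' : ℕ) := fun hc => hx (Fin.ext hc)
        rw [Fin.le_def] at h2 ⊢; omega
      · rintro ⟨h1, h2, h3⟩
        exact ⟨h1, le_trans h2 (le_of_lt hjj'), h3⟩
  -- pointwise difference
  have hpt : ∀ ℓ : Fin n, ℓ ≤ j →
      ((Sk k A j' ℓ : ℤ) - (Sk k A j ℓ : ℤ))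
        = if Sk k A j ℓ < k ∧ A ℓ < A j' then 1 else 0 := by
    intro ℓ hℓ
    unfold Sk
    rw [hcard ℓ hℓ]
    by_cases h2 : A ℓ < A j'
    · simp only [h2, if_true, and_true]
      split_ifs <;> push_cast <;> omega
    · simp only [h2, if_false, and_false]
      omega
  -- Sk k A j' j' = 0
  have hSkj' : Sk k A j' j' = 0 := by
    unfold Sk
    have : (Finset.univ.filter (fun ℓ' : Fin n => j' < ℓ' ∧ ℓ' ≤ j' ∧ A j' < A ℓ')) = ∅ := by
      ext x
      simp only [mem_filter, mem_univ, true_and, Finset.notMem_empty, iff_false, not_and]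
      intro h1 h2
      exact absurd (lt_of_lt_of_le h1 h2) (lt_irrefl _)
    simp [this]
  -- split the j' sum
  have hsplit : (Finset.univ.filter (fun ℓ : Fin n => ℓ ≤ j'))
      = insert j' (Finset.univ.filter (fun ℓ : Fin n => ℓ ≤ j)) := by
    ext x
    simp only [mem_insert, mem_filter, mem_univ, true_and]
    rw [Fin.le_def, Fin.le_def]
    constructor
    · intro h
      rcases Nat.lt_or_ge (x : ℕ) (j' : ℕ) with h' | h'
      · right; omega
      · left; exact Fin.ext (by omega)
    · rintro (rfl | h) <;> omega
  have hj'notmem : j' ∉ Finset.univ.filter (fun ℓ : Fin n => ℓ ≤ j) := by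
    simp only [mem_filter, mem_univ, true_and, Fin.le_def]
    omega
  have hmain : (∑ ℓ ∈ Finset.univ.filter (fun ℓ : Fin n => ℓ ≤ j), ((k : ℤ) - Sk k A j ℓ)) -
        (∑ ℓ ∈ Finset.univ.filter (fun ℓ : Fin n => ℓ ≤ j'), ((k : ℤ) - Sk k A j' ℓ)) + k =
      ((Finset.univ.filter (fun ℓ : Fin n =>
        ℓ ≤ j ∧ Sk k A j ℓ < k ∧ A ℓ < A j')).card : ℤ) := by
    rw [hsplit, Finset.sum_insert hj'notmem, hSkj']
    have h1 : (∑ ℓ ∈ Finset.univ.filter (fun ℓ : Fin n => ℓ ≤ j), ((k : ℤ) - Sk k A j ℓ)) -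
        (∑ ℓ ∈ Finset.univ.filter (fun ℓ : Fin n => ℓ ≤ j), ((k : ℤ) - Sk k A j' ℓ))
        = ∑ ℓ ∈ Finset.univ.filter (fun ℓ : Fin n => ℓ ≤ j),
            ((Sk k A j' ℓ : ℤ) - (Sk k A j ℓ : ℤ)) := by
      rw [← Finset.sum_sub_distrib]
      exact Finset.sum_congr rfl (fun x _ => by ring)
    have h2 : ∑ ℓ ∈ Finset.univ.filter (fun ℓ : Fin n => ℓ ≤ j),
            ((Sk k A j' ℓ : ℤ) - (Sk k A j ℓ : ℤ))
        = ∑ ℓ ∈ Finset.univ.filter (fun ℓ : Fin n => ℓ ≤ j),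
            (if Sk k A j ℓ < k ∧ A ℓ < A j' then (1 : ℤ) else 0) :=
      Finset.sum_congr rfl (fun ℓ hℓ => hpt ℓ (by simpa using hℓ))
    have h3 : (∑ ℓ ∈ Finset.univ.filter (fun ℓ : Fin n => ℓ ≤ j),
            (if Sk k A j ℓ < k ∧ A ℓ < A j' then (1 : ℤ) else 0))
        = ((Finset.univ.filter (fun ℓ : Fin n =>
            ℓ ≤ j ∧ Sk k A j ℓ < k ∧ A ℓ < A j')).card : ℤ) := by
      rw [Finset.sum_boole, Finset.filter_filter]
    push_cast at h1 h2 h3 ⊢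
    linarith
  refine ⟨?_, ?_, hmain⟩
  · rw [hmain]; positivity
  · rw [hmain]
    have hsub : (Finset.univ.filter (fun ℓ : Fin n => ℓ ≤ j ∧ Sk k A j ℓ < k ∧ A ℓ < A j'))
        ⊆ (Finset.univ.filter (fun ℓ : Fin n => ℓ ≤ j ∧ Sk k A j ℓ < k)) := by
      intro x hx
      simp only [mem_filter, mem_univ, true_and] at hx ⊢
      tauto
    have := Finset.card_le_card hsub
    have hk : (0 : ℤ) ≤ k := Int.ofNat_nonneg k
    exact_mod_cast by linarith [Int.ofNat_le.mpr this]
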